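/- arXiv:2301.06659 — 3 statements merged into one kernel-verified Lean document; each statement's English description precedes it below -/
import Mathlib

section
/- Let T > 0 and let y, y', z, z' : [0,T] × ℝ³ → ℂ be measurable. Then ‖z·conj(y) − z'·conj(y')‖_{L^{4/3}(0,T;L^{3/2}(ℝ³))} ≤ T^{1/4} · (‖y‖_{L²(0,T;L⁶(ℝ³))} + ‖z'‖_{L²(0,T;L⁶(ℝ³))}) · (ess sup_{t∈[0,T]} ‖y(t)−y'(t)‖_{L²(ℝ³)} + ess sup_{t∈[0,T]} ‖z(t)−z'(t)‖_{L²(ℝ³)}), as an inequality of extended nonnegative reals. (Lipschitz estimate for the quadratic nonlinearity used in the contraction argument in dimension d = 3.) -/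
open MeasureTheory Filter
open scoped ENNReal ComplexConjugate

private lemma measurable_eLpNorm_section {α : Type*} [MeasurableSpace α] {ν : Measure α}
    [SFinite ν] {f : ℝ → α → ℂ} (hf : Measurable (Function.uncurry f)) {p : ℝ≥0∞}
    (h0 : p ≠ 0) (ht : p ≠ ∞) :
    Measurable fun t => eLpNorm (f t) p ν := by
  simp_rw [eLpNorm_eq_lintegral_rpow_enorm_toReal h0 ht]
  exact ENNReal.continuous_rpow_const.measurable.comp
    (Measurable.lintegral_prod_right'
      (ENNReal.continuous_rpow_const.measurable.comp hf.enorm))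

/-- Lipschitz estimate for the quadratic nonlinearity, used in the contraction argument in
dimension `d = 3`:
`‖z conj(y) − z' conj(y')‖_{L^{4/3}(0,T;L^{3/2})} ≤ T^{1/4} (‖y‖_{L²(0,T;L⁶)} + ‖z'‖_{L²(0,T;L⁶)})
  · (ess sup ‖y−y'‖_{L²} + ess sup ‖z−z'‖_{L²})`. -/
theorem lipschitz_estimate_d3 (T : ℝ) (hT : 0 < T) (y y' z z' : ℝ → (Fin 3 → ℝ) → ℂ)
    (hy : Measurable (Function.uncurry y)) (hy' : Measurable (Function.uncurry y'))
    (hz : Measurable (Function.uncurry z)) (hz' : Measurable (Function.uncurry z')) :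
    (∫⁻ t in Set.Icc (0 : ℝ) T,
        eLpNorm (fun ξ => z t ξ * (starRingEnd ℂ) (y t ξ)
            - z' t ξ * (starRingEnd ℂ) (y' t ξ)) (3 / 2 : ℝ≥0∞)
          (volume : Measure (Fin 3 → ℝ)) ^ ((4 : ℝ) / 3)) ^ ((3 : ℝ) / 4)
      ≤ ENNReal.ofReal T ^ ((1 : ℝ) / 4)
          * ((∫⁻ t in Set.Icc (0 : ℝ) T,
                eLpNorm (y t) 6 (volume : Measure (Fin 3 → ℝ)) ^ ((2 : ℝ))) ^ ((1 : ℝ) / 2)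
              + (∫⁻ t in Set.Icc (0 : ℝ) T,
                  eLpNorm (z' t) 6 (volume : Measure (Fin 3 → ℝ)) ^ ((2 : ℝ))) ^ ((1 : ℝ) / 2))
          * (essSup (fun t => eLpNorm (fun ξ => y t ξ - y' t ξ) 2
                (volume : Measure (Fin 3 → ℝ)))
                ((volume : Measure ℝ).restrict (Set.Icc (0 : ℝ) T))
              + essSup (fun t => eLpNorm (fun ξ => z t ξ - z' t ξ) 2
                  (volume : Measure (Fin 3 → ℝ)))
                  ((volume : Measure ℝ).restrict (Set.Icc (0 : ℝ) T))) := by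
  set μT : Measure ℝ := (volume : Measure ℝ).restrict (Set.Icc (0 : ℝ) T) with hμT
  set ν : Measure (Fin 3 → ℝ) := volume with hν
  set A : ℝ → ℝ≥0∞ := fun t => eLpNorm (y t) 6 ν with hA
  set B : ℝ → ℝ≥0∞ := fun t => eLpNorm (z' t) 6 ν with hB
  set Ey : ℝ≥0∞ := essSup (fun t => eLpNorm (fun ξ => y t ξ - y' t ξ) 2 ν) μT with hEy
  set Ez : ℝ≥0∞ := essSup (fun t => eLpNorm (fun ξ => z t ξ - z' t ξ) 2 ν) μT with hEz
  set M : ℝ≥0∞ := Ey + Ez with hM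
  have hAmeas : Measurable A := measurable_eLpNorm_section hy (by norm_num) (by norm_num)
  have hBmeas : Measurable B := measurable_eLpNorm_section hz' (by norm_num) (by norm_num)
  -- exponent arithmetic
  have hpqr : (1 : ℝ≥0∞) / (3 / 2) = 1 / 2 + 1 / 6 := by
    refine (ENNReal.toReal_eq_toReal_iff' (by simp [ENNReal.div_eq_top])
      (by simp [ENNReal.div_eq_top])).mp ?_
    rw [ENNReal.toReal_add (by simp [ENNReal.div_eq_top]) (by simp [ENNReal.div_eq_top])]
    rw [ENNReal.toReal_div, ENNReal.toReal_div, ENNReal.toReal_div, ENNReal.toReal_div]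
    norm_num
  have hone_le : (1 : ℝ≥0∞) ≤ 3 / 2 := by
    rw [ENNReal.le_div_iff_mul_le (by norm_num) (by norm_num)]; norm_num
  -- pointwise (in t) Hölder bound
  have hpt : ∀ t : ℝ,
      eLpNorm (fun ξ => z t ξ * conj (y t ξ) - z' t ξ * conj (y' t ξ)) (3/2 : ℝ≥0∞) ν
        ≤ eLpNorm (fun ξ => z t ξ - z' t ξ) 2 ν * A t
          + B t * eLpNorm (fun ξ => y t ξ - y' t ξ) 2 ν := by
    intro t
    have hc : ∀ {g : (Fin 3 → ℝ) → ℂ}, Measurable g → Measurable fun ξ => conj (g ξ) :=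
      fun hg => RCLike.continuous_conj.measurable.comp hg
    have hmy : Measurable (y t) := hy.of_uncurry_left
    have hmy' : Measurable (y' t) := hy'.of_uncurry_left
    have hmz : Measurable (z t) := hz.of_uncurry_left
    have hmz' : Measurable (z' t) := hz'.of_uncurry_left
    have hsplit : (fun ξ => z t ξ * conj (y t ξ) - z' t ξ * conj (y' t ξ))
        = (fun ξ => (z t ξ - z' t ξ) * conj (y t ξ))
          + (fun ξ => z' t ξ * conj (y t ξ - y' t ξ)) := by
      funext ξ
      simp only [Pi.add_apply, map_sub]
      ring
    have h1 : eLpNorm (fun ξ => (z t ξ - z' t ξ) * conj (y t ξ)) (3/2 : ℝ≥0∞) ν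
        ≤ eLpNorm (fun ξ => z t ξ - z' t ξ) 2 ν * A t := by
      have := eLpNorm_le_eLpNorm_mul_eLpNorm_of_nnnorm (p := 2) (q := 6) (r := (3/2 : ℝ≥0∞))
        (μ := ν) ((hmz.sub hmz').aestronglyMeasurable)
        ((hc hmy).aestronglyMeasurable)
        (fun a b => a * b) 1
        (Eventually.of_forall fun ξ => by simp) (hpqr := ⟨by simpa only [one_div] using hpqr.symm⟩)
      rw [ENNReal.coe_one, one_mul] at this
      calc eLpNorm (fun ξ => (z t ξ - z' t ξ) * conj (y t ξ)) (3/2 : ℝ≥0∞) ν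
          ≤ eLpNorm (fun ξ => z t ξ - z' t ξ) 2 ν
              * eLpNorm (fun ξ => conj (y t ξ)) 6 ν := this
        _ = eLpNorm (fun ξ => z t ξ - z' t ξ) 2 ν * A t := by
            rw [hA]
            congr 1
            exact eLpNorm_conj (y t) 6 ν
    have h2 : eLpNorm (fun ξ => z' t ξ * conj (y t ξ - y' t ξ)) (3/2 : ℝ≥0∞) ν
        ≤ B t * eLpNorm (fun ξ => y t ξ - y' t ξ) 2 ν := by
      have hpqr' : (1 : ℝ≥0∞) / (3 / 2) = 1 / 6 + 1 / 2 := by rw [hpqr, add_comm]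
      have := eLpNorm_le_eLpNorm_mul_eLpNorm_of_nnnorm (p := 6) (q := 2) (r := (3/2 : ℝ≥0∞))
        (μ := ν) (hmz'.aestronglyMeasurable)
        ((hc (hmy.sub hmy')).aestronglyMeasurable)
        (fun a b => a * b) 1
        (Eventually.of_forall fun ξ => by simp) (hpqr := ⟨by simpa only [one_div] using hpqr'.symm⟩)
      rw [ENNReal.coe_one, one_mul] at this
      calc eLpNorm (fun ξ => z' t ξ * conj (y t ξ - y' t ξ)) (3/2 : ℝ≥0∞) ν
          ≤ eLpNorm (z' t) 6 ν * eLpNorm (fun ξ => conj (y t ξ - y' t ξ)) 2 ν := this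
        _ = B t * eLpNorm (fun ξ => y t ξ - y' t ξ) 2 ν := by
            rw [hB]
            congr 1
            exact eLpNorm_conj (fun ξ => y t ξ - y' t ξ) 2 ν
    calc eLpNorm (fun ξ => z t ξ * conj (y t ξ) - z' t ξ * conj (y' t ξ)) (3/2 : ℝ≥0∞) ν
        = eLpNorm ((fun ξ => (z t ξ - z' t ξ) * conj (y t ξ))
            + (fun ξ => z' t ξ * conj (y t ξ - y' t ξ))) (3/2 : ℝ≥0∞) ν := by rw [hsplit]
      _ ≤ eLpNorm (fun ξ => (z t ξ - z' t ξ) * conj (y t ξ)) (3/2 : ℝ≥0∞) ν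
            + eLpNorm (fun ξ => z' t ξ * conj (y t ξ - y' t ξ)) (3/2 : ℝ≥0∞) ν :=
          eLpNorm_add_le ((hmz.sub hmz').mul (hc hmy)).aestronglyMeasurable
            (hmz'.mul (hc (hmy.sub hmy'))).aestronglyMeasurable hone_le
      _ ≤ _ := add_le_add h1 h2
  -- a.e. bound by essSup
  have hae : ∀ᵐ t ∂μT,
      eLpNorm (fun ξ => z t ξ * conj (y t ξ) - z' t ξ * conj (y' t ξ)) (3/2 : ℝ≥0∞) ν
        ≤ (A t + B t) * M := by
    have hay : ∀ᵐ t ∂μT, eLpNorm (fun ξ => y t ξ - y' t ξ) 2 ν ≤ Ey := ae_le_essSup (Filter.isBoundedUnder_of ⟨⊤, fun _ => le_top⟩)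
    have haz : ∀ᵐ t ∂μT, eLpNorm (fun ξ => z t ξ - z' t ξ) 2 ν ≤ Ez := ae_le_essSup (Filter.isBoundedUnder_of ⟨⊤, fun _ => le_top⟩)
    filter_upwards [hay, haz] with t h1 h2
    refine (hpt t).trans ?_
    have : eLpNorm (fun ξ => z t ξ - z' t ξ) 2 ν * A t
          + B t * eLpNorm (fun ξ => y t ξ - y' t ξ) 2 ν
        ≤ Ez * A t + B t * Ey :=
      add_le_add (mul_le_mul' h2 le_rfl) (mul_le_mul' le_rfl h1)
    refine this.trans ?_
    have expand : (A t + B t) * M = A t * Ey + (Ez * A t + (B t * Ey + B t * Ez)) := by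
      rw [hM]; ring
    rw [expand]
    calc Ez * A t + B t * Ey ≤ Ez * A t + (B t * Ey + B t * Ez) :=
          add_le_add le_rfl le_self_add
      _ ≤ A t * Ey + (Ez * A t + (B t * Ey + B t * Ez)) := le_add_self
  -- time integral estimates
  have hstep1 : (∫⁻ t in Set.Icc (0:ℝ) T,
        eLpNorm (fun ξ => z t ξ * conj (y t ξ) - z' t ξ * conj (y' t ξ)) (3/2 : ℝ≥0∞) ν
          ^ ((4:ℝ)/3))
      ≤ ∫⁻ t, ((A t + B t) * M) ^ ((4:ℝ)/3) ∂μT :=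
    lintegral_mono_ae (hae.mono fun t h => ENNReal.rpow_le_rpow h (by norm_num))
  have hABmeas : Measurable fun t => (A t + B t) ^ ((4:ℝ)/3) :=
    ENNReal.continuous_rpow_const.measurable.comp (hAmeas.add hBmeas)
  have hstep2 : (∫⁻ t, ((A t + B t) * M) ^ ((4:ℝ)/3) ∂μT)
      = (∫⁻ t, (A t + B t) ^ ((4:ℝ)/3) ∂μT) * M ^ ((4:ℝ)/3) := by
    simp_rw [ENNReal.mul_rpow_of_nonneg _ _ (by norm_num : (0:ℝ) ≤ 4/3)]
    exact lintegral_mul_const'' _ hABmeas.aemeasurable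
  have hμTuniv : μT Set.univ = ENNReal.ofReal T := by
    rw [hμT, Measure.restrict_apply_univ, Real.volume_Icc, sub_zero]
  have hstep3 : (∫⁻ t, (A t + B t) ^ ((4:ℝ)/3) ∂μT)
      ≤ (∫⁻ t, (A t + B t) ^ ((2:ℝ)) ∂μT) ^ ((2:ℝ)/3) * ENNReal.ofReal T ^ ((1:ℝ)/3) := by
    have hconj : ((3:ℝ)/2).HolderConjugate 3 := by constructor <;> norm_num
    have := ENNReal.lintegral_mul_le_Lp_mul_Lq μT hconj
      (f := fun t => (A t + B t) ^ ((4:ℝ)/3)) (g := fun _ => 1)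
      hABmeas.aemeasurable aemeasurable_const
    simp only [Pi.mul_apply, mul_one, ENNReal.one_rpow, lintegral_const, one_mul] at this
    calc (∫⁻ t, (A t + B t) ^ ((4:ℝ)/3) ∂μT)
        ≤ (∫⁻ t, ((A t + B t) ^ ((4:ℝ)/3)) ^ ((3:ℝ)/2) ∂μT) ^ (1/((3:ℝ)/2))
            * (μT Set.univ) ^ (1/(3:ℝ)) := this
      _ = (∫⁻ t, (A t + B t) ^ ((2:ℝ)) ∂μT) ^ ((2:ℝ)/3) * ENNReal.ofReal T ^ ((1:ℝ)/3) := by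
          rw [hμTuniv]
          have h5 : (∫⁻ t, ((A t + B t) ^ ((4:ℝ)/3)) ^ ((3:ℝ)/2) ∂μT)
              = ∫⁻ t, (A t + B t) ^ ((2:ℝ)) ∂μT := by
            apply lintegral_congr
            intro t
            rw [← ENNReal.rpow_mul]
            norm_num
          rw [h5]
          norm_num
  have hstep4 : (∫⁻ t, (A t + B t) ^ ((2:ℝ)) ∂μT) ^ ((1:ℝ)/2)
      ≤ (∫⁻ t, A t ^ ((2:ℝ)) ∂μT) ^ ((1:ℝ)/2) + (∫⁻ t, B t ^ ((2:ℝ)) ∂μT) ^ ((1:ℝ)/2) :=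
    ENNReal.lintegral_Lp_add_le hAmeas.aemeasurable hBmeas.aemeasurable (by norm_num)
  -- assemble
  calc (∫⁻ t in Set.Icc (0:ℝ) T,
        eLpNorm (fun ξ => z t ξ * conj (y t ξ) - z' t ξ * conj (y' t ξ)) (3/2 : ℝ≥0∞) ν
          ^ ((4:ℝ)/3)) ^ ((3:ℝ)/4)
      ≤ ((∫⁻ t, (A t + B t) ^ ((4:ℝ)/3) ∂μT) * M ^ ((4:ℝ)/3)) ^ ((3:ℝ)/4) := by
        rw [← hstep2]
        exact ENNReal.rpow_le_rpow hstep1 (by norm_num)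
    _ = (∫⁻ t, (A t + B t) ^ ((4:ℝ)/3) ∂μT) ^ ((3:ℝ)/4) * M := by
        rw [ENNReal.mul_rpow_of_nonneg _ _ (by norm_num : (0:ℝ) ≤ 3/4), ← ENNReal.rpow_mul]
        norm_num
    _ ≤ ((∫⁻ t, (A t + B t) ^ ((2:ℝ)) ∂μT) ^ ((2:ℝ)/3) * ENNReal.ofReal T ^ ((1:ℝ)/3))
          ^ ((3:ℝ)/4) * M :=
        mul_le_mul' (ENNReal.rpow_le_rpow hstep3 (by norm_num)) le_rfl
    _ = (∫⁻ t, (A t + B t) ^ ((2:ℝ)) ∂μT) ^ ((1:ℝ)/2) * ENNReal.ofReal T ^ ((1:ℝ)/4) * M := by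
        rw [ENNReal.mul_rpow_of_nonneg _ _ (by norm_num : (0:ℝ) ≤ 3/4),
          ← ENNReal.rpow_mul, ← ENNReal.rpow_mul]
        norm_num
    _ ≤ ((∫⁻ t, A t ^ ((2:ℝ)) ∂μT) ^ ((1:ℝ)/2) + (∫⁻ t, B t ^ ((2:ℝ)) ∂μT) ^ ((1:ℝ)/2))
          * ENNReal.ofReal T ^ ((1:ℝ)/4) * M :=
        mul_le_mul' (mul_le_mul' hstep4 le_rfl) le_rfl
    _ = ENNReal.ofReal T ^ ((1:ℝ)/4)
          * ((∫⁻ t, A t ^ ((2:ℝ)) ∂μT) ^ ((1:ℝ)/2) + (∫⁻ t, B t ^ ((2:ℝ)) ∂μT) ^ ((1:ℝ)/2))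
          * M := by ring
end

section
/- Let T > 0 and let y, z : [0,T] × ℝ → ℂ be measurable, such that for almost every t ∈ [0,T] the functions y(t,·) and z(t,·) are differentiable on ℝ. Then ∫₀ᵀ ‖z(t)·conj(y(t))‖_{W^{1,2}(ℝ)} dt ≤ 2 · T^{3/4} · (∫₀ᵀ ‖z(t)‖_{W^{1,∞}(ℝ)}⁴ dt)^{1/4} · ess sup_{t∈[0,T]} ‖y(t)‖_{W^{1,2}(ℝ)}, as an inequality of extended nonnegative reals. (H¹-level bilinear estimate used for the quadratic nonlinearity in dimension d = 1.) -/
set_option maxHeartbeats 1000000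

open MeasureTheory Filter
open scoped ENNReal NNReal

/-- Sobolev `W^{1,p}` norm of a function `f : ℝ → ℂ`:
`‖f‖_{W^{1,p}} = ‖f‖_{L^p} + ‖∇f‖_{L^p}`, valued in `[0,∞]`. -/
noncomputable def W1NormR (p : ℝ≥0∞) (f : ℝ → ℂ) : ℝ≥0∞ :=
  eLpNorm f p (volume : Measure ℝ) + eLpNorm (fderiv ℝ f) p (volume : Measure ℝ)

/-! ### Auxiliary lemmas -/

lemma my_eLpNorm_fderiv_eq (g : ℝ → ℂ) (p : ℝ≥0∞) :
    eLpNorm (fderiv ℝ g) p (volume : Measure ℝ) = eLpNorm (deriv g) p (volume : Measure ℝ) := by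
  rw [← eLpNorm_norm (fderiv ℝ g), ← eLpNorm_norm (deriv g)]
  congr 1
  funext x
  exact norm_deriv_eq_norm_fderiv.symm

lemma my_sm_fderiv (g : ℝ → ℂ) : StronglyMeasurable (fderiv ℝ g) := by
  have h : fderiv ℝ g = fun x => (ContinuousLinearMap.smulRightL ℝ ℝ ℂ (1 : ℝ →L[ℝ] ℝ)) (deriv g x) := by
    funext x
    show fderiv ℝ g x = ContinuousLinearMap.smulRight (1 : ℝ →L[ℝ] ℝ) (deriv g x)
    ext; rw [ContinuousLinearMap.smulRight_apply, ContinuousLinearMap.one_apply, one_smul]; rfl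
  rw [h]
  exact (ContinuousLinearMap.smulRightL ℝ ℝ ℂ (1 : ℝ →L[ℝ] ℝ)).continuous.comp_stronglyMeasurable
    (stronglyMeasurable_deriv g)

open scoped Classical in
lemma my_essSup_eq_iInf {β : Type*} [MeasurableSpace β] (ν : Measure β) (g : β → ℝ≥0∞) :
    essSup g ν = ⨅ q : ℚ, if ν {b | ENNReal.ofReal q < g b} = 0 then ENNReal.ofReal q else ⊤ := by
  apply le_antisymm
  · refine le_iInf fun q => ?_
    split_ifs with hq
    · rw [essSup_eq_sInf]
      exact sInf_le hq
    · exact le_top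
  · by_cases h : essSup g ν = ⊤
    · rw [h]; exact le_top
    · refine ENNReal.le_of_forall_pos_le_add fun ε hε _ => ?_
      have hlt : essSup g ν < essSup g ν + ε :=
        ENNReal.lt_add_right h (by exact_mod_cast hε.ne')
      obtain ⟨q, hq0, hq1, hq2⟩ := ENNReal.lt_iff_exists_rat_btwn.1 hlt
      have hofReal : ENNReal.ofReal (q : ℝ) = (Real.toNNReal (q : ℝ) : ℝ≥0∞) := rfl
      have hnull : ν {b | ENNReal.ofReal (q : ℝ) < g b} = 0 := by
        have hae := ENNReal.ae_le_essSup (μ := ν) g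
        rw [Filter.eventually_iff, mem_ae_iff] at hae
        refine measure_mono_null (fun b hb => ?_) hae
        simp only [Set.mem_setOf_eq] at hb
        simp only [Set.mem_compl_iff, Set.mem_setOf_eq, not_le]
        calc essSup g ν < ENNReal.ofReal (q : ℝ) := by rw [hofReal]; exact_mod_cast hq1
          _ < g b := hb
      calc (⨅ q : ℚ, if ν {b | ENNReal.ofReal q < g b} = 0 then ENNReal.ofReal q else ⊤)
          ≤ (if ν {b | ENNReal.ofReal (q : ℝ) < g b} = 0 then ENNReal.ofReal (q : ℝ) else ⊤) :=
            iInf_le _ q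
        _ = ENNReal.ofReal (q : ℝ) := if_pos hnull
        _ ≤ essSup g ν + ε := by rw [hofReal]; exact hq2.le

open scoped Classical in
lemma my_measurable_essSup {α β : Type*} [MeasurableSpace α] [MeasurableSpace β]
    (ν : Measure β) [SFinite ν] {G : α × β → ℝ≥0∞} (hG : Measurable G) :
    Measurable fun a => essSup (fun b => G (a, b)) ν := by
  simp_rw [my_essSup_eq_iInf ν]
  refine Measurable.iInf fun q => ?_
  have hset : MeasurableSet {p : α × β | ENNReal.ofReal q < G p} :=
    measurableSet_lt measurable_const hG
  have hm : Measurable fun a => ν (Prod.mk a ⁻¹' {p : α × β | ENNReal.ofReal q < G p}) :=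
    measurable_measure_prodMk_left hset
  exact Measurable.ite (hm (measurableSet_singleton 0)) measurable_const measurable_const

lemma my_lintegral_le_rpow {α : Type*} [MeasurableSpace α] (μ : Measure α) (w : α → ℝ≥0∞) :
    ∫⁻ a, w a ∂μ ≤ (∫⁻ a, w a ^ (4 : ℝ) ∂μ) ^ ((1 : ℝ)/4) * (μ Set.univ) ^ ((3 : ℝ)/4) := by
  obtain ⟨g, hgm, hgle, hgeq⟩ := exists_measurable_le_lintegral_eq μ w
  rw [hgeq]
  have hpq : Real.HolderConjugate 4 (4/3) := ⟨by norm_num, by norm_num, by norm_num⟩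
  calc ∫⁻ a, g a ∂μ = ∫⁻ a, (g * (1 : α → ℝ≥0∞)) a ∂μ := by simp
    _ ≤ (∫⁻ a, g a ^ (4 : ℝ) ∂μ) ^ (1/(4 : ℝ)) * (∫⁻ a, (1 : α → ℝ≥0∞) a ^ ((4 : ℝ)/3) ∂μ) ^ (1/((4 : ℝ)/3)) :=
        ENNReal.lintegral_mul_le_Lp_mul_Lq μ hpq hgm.aemeasurable aemeasurable_const
    _ ≤ (∫⁻ a, w a ^ (4 : ℝ) ∂μ) ^ ((1 : ℝ)/4) * (μ Set.univ) ^ ((3 : ℝ)/4) := by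
        have h1 : (∫⁻ a, (1 : α → ℝ≥0∞) a ^ ((4 : ℝ)/3) ∂μ) = μ Set.univ := by simp
        have h2 : (1/((4 : ℝ)/3)) = (3 : ℝ)/4 := by norm_num
        rw [h1, h2]
        exact mul_le_mul'
          (ENNReal.rpow_le_rpow (lintegral_mono fun a => ENNReal.rpow_le_rpow (hgle a) (by norm_num)) (by norm_num))
          le_rfl

lemma my_pointwise (Y Z : ℝ → ℂ) (hYm : Measurable Y) (hZm : Measurable Z)
    (hYd : Differentiable ℝ Y) (hZd : Differentiable ℝ Z) :
    W1NormR 2 (fun ξ => Z ξ * (starRingEnd ℂ) (Y ξ)) ≤ W1NormR ⊤ Z * W1NormR 2 Y := by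
  set Yc : ℝ → ℂ := fun ξ => (starRingEnd ℂ) (Y ξ) with hYc
  have hYcm : Measurable Yc := Complex.continuous_conj.measurable.comp hYm
  have hYcd : Differentiable ℝ Yc := fun ξ => ((hYd ξ).star : DifferentiableAt ℝ (fun x => star (Y x)) ξ)
  have hYcnorm : eLpNorm Yc 2 (volume : Measure ℝ) = eLpNorm Y 2 (volume : Measure ℝ) := by
    rw [← eLpNorm_norm Yc, ← eLpNorm_norm Y]
    congr 1
    funext x
    exact norm_star (Y x)
  have h0 : eLpNorm (fun ξ => Z ξ * Yc ξ) 2 (volume : Measure ℝ)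
      ≤ eLpNorm Z ⊤ (volume : Measure ℝ) * eLpNorm Y 2 (volume : Measure ℝ) := by
    have h : eLpNorm (fun ξ => Z ξ * Yc ξ) 2 (volume : Measure ℝ)
        ≤ eLpNorm Z ⊤ (volume : Measure ℝ) * eLpNorm Yc 2 (volume : Measure ℝ) :=
      eLpNorm_le_eLpNorm_top_mul_eLpNorm (μ := (volume : Measure ℝ)) 2 Z
        hYcm.aestronglyMeasurable (fun a b => a * b) 1
        (Eventually.of_forall fun x => by rw [one_mul]; exact (nnnorm_mul (Z x) (Yc x)).le) |>.trans_eq (by simp)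
    rwa [hYcnorm] at h
  have hdYc : eLpNorm (fderiv ℝ Yc) 2 (volume : Measure ℝ)
      = eLpNorm (fderiv ℝ Y) 2 (volume : Measure ℝ) := by
    rw [my_eLpNorm_fderiv_eq, my_eLpNorm_fderiv_eq]
    rw [← eLpNorm_norm (deriv Yc), ← eLpNorm_norm (deriv Y)]
    congr 1
    funext x
    have : deriv Yc x = star (deriv Y x) := deriv.star
    rw [this, norm_star]
  have hprod : fderiv ℝ (fun ξ => Z ξ * Yc ξ)
      = fun ξ => Z ξ • fderiv ℝ Yc ξ + Yc ξ • fderiv ℝ Z ξ := by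
    funext ξ
    exact fderiv_mul (hZd ξ) (hYcd ξ)
  have h1 : eLpNorm (fderiv ℝ (fun ξ => Z ξ * Yc ξ)) 2 (volume : Measure ℝ)
      ≤ eLpNorm Z ⊤ (volume : Measure ℝ) * eLpNorm (fderiv ℝ Y) 2 (volume : Measure ℝ)
        + eLpNorm Y 2 (volume : Measure ℝ) * eLpNorm (fderiv ℝ Z) ⊤ (volume : Measure ℝ) := by
    rw [hprod]
    have hA : AEStronglyMeasurable (fun ξ => Z ξ • fderiv ℝ Yc ξ) (volume : Measure ℝ) :=
      (hZm.stronglyMeasurable.smul (my_sm_fderiv Yc)).aestronglyMeasurable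
    have hB : AEStronglyMeasurable (fun ξ => Yc ξ • fderiv ℝ Z ξ) (volume : Measure ℝ) :=
      (hYcm.stronglyMeasurable.smul (my_sm_fderiv Z)).aestronglyMeasurable
    calc eLpNorm (fun ξ => Z ξ • fderiv ℝ Yc ξ + Yc ξ • fderiv ℝ Z ξ) 2 (volume : Measure ℝ)
        ≤ eLpNorm (fun ξ => Z ξ • fderiv ℝ Yc ξ) 2 (volume : Measure ℝ)
          + eLpNorm (fun ξ => Yc ξ • fderiv ℝ Z ξ) 2 (volume : Measure ℝ) :=
          eLpNorm_add_le (f := fun ξ => Z ξ • fderiv ℝ Yc ξ) (g := fun ξ => Yc ξ • fderiv ℝ Z ξ) (p := 2) hA hB (by norm_num)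
      _ ≤ eLpNorm Z ⊤ (volume : Measure ℝ) * eLpNorm (fderiv ℝ Yc) 2 (volume : Measure ℝ)
          + eLpNorm Yc 2 (volume : Measure ℝ) * eLpNorm (fderiv ℝ Z) ⊤ (volume : Measure ℝ) := by
          refine add_le_add ?_ ?_
          · exact eLpNorm_le_eLpNorm_top_mul_eLpNorm (μ := (volume : Measure ℝ)) 2 Z
              (my_sm_fderiv Yc).aestronglyMeasurable (fun a b => a • b) 1
              (Eventually.of_forall fun x => by rw [one_mul]; exact nnnorm_smul_le (Z x) (fderiv ℝ Yc x)) |>.trans_eq (by simp)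
          · exact eLpNorm_le_eLpNorm_mul_eLpNorm_top (μ := (volume : Measure ℝ)) 2
              hYcm.aestronglyMeasurable (fderiv ℝ Z) (fun a b => a • b) 1
              (Eventually.of_forall fun x => by rw [one_mul]; exact nnnorm_smul_le (Yc x) (fderiv ℝ Z x)) |>.trans_eq (by simp)
      _ = eLpNorm Z ⊤ (volume : Measure ℝ) * eLpNorm (fderiv ℝ Y) 2 (volume : Measure ℝ)
          + eLpNorm Y 2 (volume : Measure ℝ) * eLpNorm (fderiv ℝ Z) ⊤ (volume : Measure ℝ) := by
          rw [hdYc, hYcnorm]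
  calc W1NormR 2 (fun ξ => Z ξ * (starRingEnd ℂ) (Y ξ))
      = eLpNorm (fun ξ => Z ξ * Yc ξ) 2 (volume : Measure ℝ)
        + eLpNorm (fderiv ℝ (fun ξ => Z ξ * Yc ξ)) 2 (volume : Measure ℝ) := rfl
    _ ≤ (eLpNorm Z ⊤ (volume : Measure ℝ) * eLpNorm Y 2 (volume : Measure ℝ))
        + (eLpNorm Z ⊤ (volume : Measure ℝ) * eLpNorm (fderiv ℝ Y) 2 (volume : Measure ℝ)
          + eLpNorm Y 2 (volume : Measure ℝ) * eLpNorm (fderiv ℝ Z) ⊤ (volume : Measure ℝ)) :=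
        add_le_add h0 h1
    _ ≤ (eLpNorm Z ⊤ (volume : Measure ℝ) * eLpNorm Y 2 (volume : Measure ℝ)
        + (eLpNorm Z ⊤ (volume : Measure ℝ) * eLpNorm (fderiv ℝ Y) 2 (volume : Measure ℝ)
          + eLpNorm Y 2 (volume : Measure ℝ) * eLpNorm (fderiv ℝ Z) ⊤ (volume : Measure ℝ)))
        + eLpNorm (fderiv ℝ Z) ⊤ (volume : Measure ℝ) * eLpNorm (fderiv ℝ Y) 2 (volume : Measure ℝ) :=
        self_le_add_right _ _
    _ = W1NormR ⊤ Z * W1NormR 2 Y := by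
        show _ = (eLpNorm Z ⊤ (volume : Measure ℝ) + eLpNorm (fderiv ℝ Z) ⊤ (volume : Measure ℝ))
          * (eLpNorm Y 2 (volume : Measure ℝ) + eLpNorm (fderiv ℝ Y) 2 (volume : Measure ℝ))
        ring

lemma my_aemeas_deriv {T : ℝ} (z : ℝ → ℝ → ℂ) (hz : Measurable (Function.uncurry z))
    (hzd : ∀ᵐ t ∂((volume : Measure ℝ).restrict (Set.Icc (0 : ℝ) T)), Differentiable ℝ (z t)) :
    AEMeasurable (fun p : ℝ × ℝ => deriv (z p.1) p.2)
      (((volume : Measure ℝ).restrict (Set.Icc (0 : ℝ) T)).prod (volume : Measure ℝ)) := by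
  set μ := (volume : Measure ℝ).restrict (Set.Icc (0 : ℝ) T)
  have hgm : ∀ n : ℕ, AEMeasurable
      (fun p : ℝ × ℝ => ((n : ℝ) + 1) • (z p.1 (p.2 + ((n : ℝ) + 1)⁻¹) - z p.1 p.2))
      (μ.prod (volume : Measure ℝ)) := by
    intro n
    have h1 : Measurable fun p : ℝ × ℝ => z p.1 (p.2 + ((n : ℝ) + 1)⁻¹) :=
      hz.comp (measurable_fst.prodMk (measurable_snd.add_const _))
    have h2 : Measurable fun p : ℝ × ℝ => z p.1 p.2 :=
      hz.comp (measurable_fst.prodMk measurable_snd)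
    exact ((h1.sub h2).const_smul ((n : ℝ) + 1)).aemeasurable
  apply aemeasurable_of_tendsto_metrizable_ae atTop hgm
  have hprodae : ∀ᵐ p : ℝ × ℝ ∂(μ.prod (volume : Measure ℝ)), Differentiable ℝ (z p.1) := by
    rw [ae_iff] at hzd ⊢
    refine measure_mono_null
      (fun p hp => (?_ : p ∈ (toMeasurable μ {t | ¬Differentiable ℝ (z t)}) ×ˢ Set.univ)) ?_
    · exact ⟨subset_toMeasurable _ _ hp, trivial⟩
    · rw [Measure.prod_prod, measure_toMeasurable, hzd, zero_mul]
  filter_upwards [hprodae] with p hp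
  have hd : HasDerivAt (z p.1) (deriv (z p.1) p.2) p.2 := (hp p.2).hasDerivAt
  have hslope := hasDerivAt_iff_tendsto_slope.1 hd
  have hseq : Tendsto (fun n : ℕ => p.2 + ((n : ℝ) + 1)⁻¹) atTop (nhdsWithin p.2 {p.2}ᶜ) := by
    apply tendsto_nhdsWithin_of_tendsto_nhds_of_eventually_within
    · have h0 : Tendsto (fun n : ℕ => ((n : ℝ) + 1)⁻¹) atTop (nhds 0) := by
        simpa [one_div] using tendsto_one_div_add_atTop_nhds_zero_nat (𝕜 := ℝ)
      simpa using tendsto_const_nhds.add h0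
    · filter_upwards with n
      simp only [Set.mem_compl_iff, Set.mem_singleton_iff]
      intro h
      have : ((n : ℝ) + 1)⁻¹ = 0 := by linarith [congrArg (fun x => x - p.2) h]
      exact (inv_ne_zero (by positivity)).elim this
  have := hslope.comp hseq
  convert this using 2 with n
  show ((n : ℝ) + 1) • (z p.1 (p.2 + ((n : ℝ) + 1)⁻¹) - z p.1 p.2)
      = slope (z p.1) p.2 (p.2 + ((n : ℝ) + 1)⁻¹)
  rw [slope_def_module]
  simp

/-- `H¹`-level bilinear estimate for the quadratic nonlinearity in dimension `d = 1`:
`∫₀ᵀ ‖z(t) conj(y(t))‖_{W^{1,2}} dt ≤ 2 T^{3/4} (∫₀ᵀ ‖z(t)‖_{W^{1,∞}}⁴ dt)^{1/4}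
  · ess sup_{t∈[0,T]} ‖y(t)‖_{W^{1,2}}`. -/
theorem bilinear_estimate_H1_d1 (T : ℝ) (hT : 0 < T) (y z : ℝ → ℝ → ℂ)
    (hy : Measurable (Function.uncurry y)) (hz : Measurable (Function.uncurry z))
    (hdiff : ∀ᵐ t ∂((volume : Measure ℝ).restrict (Set.Icc (0 : ℝ) T)),
      Differentiable ℝ (y t) ∧ Differentiable ℝ (z t)) :
    (∫⁻ t in Set.Icc (0 : ℝ) T,
        W1NormR 2 (fun ξ => z t ξ * (starRingEnd ℂ) (y t ξ)))
      ≤ 2 * ENNReal.ofReal T ^ ((3 : ℝ) / 4)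
          * (∫⁻ t in Set.Icc (0 : ℝ) T, W1NormR ⊤ (z t) ^ ((4 : ℝ))) ^ ((1 : ℝ) / 4)
          * essSup (fun t => W1NormR 2 (y t))
              ((volume : Measure ℝ).restrict (Set.Icc (0 : ℝ) T)) := by
  set μ := (volume : Measure ℝ).restrict (Set.Icc (0 : ℝ) T) with hμ
  set E := essSup (fun t => W1NormR 2 (y t)) μ with hE
  set I4 := ∫⁻ t, W1NormR ⊤ (z t) ^ (4 : ℝ) ∂μ with hI4
  -- pointwise bound a.e.
  have hbound : ∀ᵐ t ∂μ, W1NormR 2 (fun ξ => z t ξ * (starRingEnd ℂ) (y t ξ))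
      ≤ W1NormR ⊤ (z t) * W1NormR 2 (y t) := by
    filter_upwards [hdiff] with t ht
    exact my_pointwise (y t) (z t) (hy.comp measurable_prodMk_left)
      (hz.comp measurable_prodMk_left) ht.1 ht.2
  have step1 : (∫⁻ t, W1NormR 2 (fun ξ => z t ξ * (starRingEnd ℂ) (y t ξ)) ∂μ)
      ≤ ∫⁻ t, W1NormR ⊤ (z t) * W1NormR 2 (y t) ∂μ := lintegral_mono_ae hbound
  have hμuniv : μ Set.univ = ENNReal.ofReal T := by
    rw [hμ, Measure.restrict_apply_univ, Real.volume_Icc, sub_zero]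
  by_cases hEtop : E = ⊤
  · by_cases hI : I4 = 0
    · -- corner case: the `z`-factor vanishes a.e.
      -- measurability of `t ↦ W1NormR ⊤ (z t)`
      have hu0m : Measurable fun t => eLpNorm (z t) ⊤ (volume : Measure ℝ) := by
        have h : (fun t => eLpNorm (z t) ⊤ (volume : Measure ℝ))
            = fun t => essSup (fun ξ => ((‖Function.uncurry z (t, ξ)‖₊ : ℝ≥0) : ℝ≥0∞)) volume := by
          funext t
          rw [eLpNorm_exponent_top]
          rfl
        rw [h]
        exact my_measurable_essSup (ν := (volume : Measure ℝ))
          (G := fun p : ℝ × ℝ => ((‖Function.uncurry z p‖₊ : ℝ≥0) : ℝ≥0∞))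
          (hz.nnnorm.coe_nnreal_ennreal)
      have hu1m : AEMeasurable (fun t => eLpNorm (fderiv ℝ (z t)) ⊤ (volume : Measure ℝ)) μ := by
        have hW : AEMeasurable (fun p : ℝ × ℝ => deriv (z p.1) p.2) (μ.prod (volume : Measure ℝ)) :=
          my_aemeas_deriv z hz (hdiff.mono fun t ht => ht.2)
        have hmk : Measurable fun t =>
            essSup (fun ξ => ((‖hW.mk (fun p : ℝ × ℝ => deriv (z p.1) p.2) (t, ξ)‖₊ : ℝ≥0) : ℝ≥0∞))
              (volume : Measure ℝ) :=
          my_measurable_essSup (ν := (volume : Measure ℝ))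
            (G := fun p : ℝ × ℝ => ((‖hW.mk (fun p : ℝ × ℝ => deriv (z p.1) p.2) p‖₊ : ℝ≥0) : ℝ≥0∞))
            (hW.measurable_mk.nnnorm.coe_nnreal_ennreal)
        refine hmk.aemeasurable.congr ?_
        have hae := Measure.ae_ae_of_ae_prod hW.ae_eq_mk.symm
        filter_upwards [hae] with t ht
        have h1 : eLpNorm (fderiv ℝ (z t)) ⊤ (volume : Measure ℝ)
            = essSup (fun ξ => ((‖deriv (z t) ξ‖₊ : ℝ≥0) : ℝ≥0∞)) volume := by
          rw [my_eLpNorm_fderiv_eq, eLpNorm_exponent_top]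
          rfl
        rw [h1]
        exact essSup_congr_ae (ht.mono fun ξ hξ => by simp only [hξ])
      have hum : AEMeasurable (fun t => W1NormR ⊤ (z t)) μ := hu0m.aemeasurable.add hu1m
      have hu4m : AEMeasurable (fun t => W1NormR ⊤ (z t) ^ (4 : ℝ)) μ :=
        (ENNReal.continuous_rpow_const.measurable).comp_aemeasurable hum
      have hu0 : (fun t => W1NormR ⊤ (z t) ^ (4 : ℝ)) =ᵐ[μ] 0 :=
        (lintegral_eq_zero_iff' hu4m).1 hI
      have huz : (fun t => W1NormR ⊤ (z t)) =ᵐ[μ] 0 := by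
        filter_upwards [hu0] with t ht
        simp only [Pi.zero_apply] at ht ⊢
        rcases ENNReal.rpow_eq_zero_iff.1 ht with ⟨h, _⟩ | ⟨_, h⟩
        · exact h
        · norm_num at h
      have hLHS : (∫⁻ t, W1NormR 2 (fun ξ => z t ξ * (starRingEnd ℂ) (y t ξ)) ∂μ) = 0 := by
        have : (∫⁻ t, W1NormR 2 (fun ξ => z t ξ * (starRingEnd ℂ) (y t ξ)) ∂μ) ≤ ∫⁻ _, (0:ℝ≥0∞) ∂μ := by
          refine lintegral_mono_ae ?_
          filter_upwards [hbound, huz] with t h1 h2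
          calc W1NormR 2 (fun ξ => z t ξ * (starRingEnd ℂ) (y t ξ))
              ≤ W1NormR ⊤ (z t) * W1NormR 2 (y t) := h1
            _ = 0 * W1NormR 2 (y t) := by rw [show W1NormR ⊤ (z t) = 0 from h2]
            _ = 0 := zero_mul _
        simpa using le_antisymm (by simpa using this) (by simp)
      rw [hLHS]
      exact bot_le
    · -- the right-hand side is infinite
      have hpos : 2 * ENNReal.ofReal T ^ ((3 : ℝ) / 4) * I4 ^ ((1 : ℝ) / 4) ≠ 0 := by
        refine mul_ne_zero (mul_ne_zero two_ne_zero ?_) ?_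
        · simp only [ne_eq, ENNReal.rpow_eq_zero_iff, not_or, not_and]
          constructor
          · intro h; exact absurd h (by simp [ENNReal.ofReal_eq_zero, not_le, hT])
          · intro _; norm_num
        · simp only [ne_eq, ENNReal.rpow_eq_zero_iff, not_or, not_and]
          exact ⟨fun h => absurd h hI, fun _ => by norm_num⟩
      calc (∫⁻ t, W1NormR 2 (fun ξ => z t ξ * (starRingEnd ℂ) (y t ξ)) ∂μ) ≤ ⊤ := le_top
        _ = 2 * ENNReal.ofReal T ^ ((3 : ℝ) / 4) * I4 ^ ((1 : ℝ) / 4) * E := by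
            rw [hEtop, ENNReal.mul_top hpos]
  · -- main case : `E < ∞`
    calc (∫⁻ t, W1NormR 2 (fun ξ => z t ξ * (starRingEnd ℂ) (y t ξ)) ∂μ)
        ≤ ∫⁻ t, W1NormR ⊤ (z t) * W1NormR 2 (y t) ∂μ := step1
      _ ≤ ∫⁻ t, W1NormR ⊤ (z t) * E ∂μ := by
          refine lintegral_mono_ae ?_
          filter_upwards [ENNReal.ae_le_essSup (μ := μ) (fun t => W1NormR 2 (y t))] with t ht
          exact mul_le_mul_right ht _
      _ = (∫⁻ t, W1NormR ⊤ (z t) ∂μ) * E := lintegral_mul_const' E _ hEtop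
      _ ≤ (I4 ^ ((1 : ℝ)/4) * (μ Set.univ) ^ ((3 : ℝ)/4)) * E :=
          mul_le_mul_left (my_lintegral_le_rpow μ fun t => W1NormR ⊤ (z t)) E
      _ = ENNReal.ofReal T ^ ((3 : ℝ)/4) * I4 ^ ((1 : ℝ)/4) * E := by
          rw [hμuniv]; ring
      _ ≤ 2 * ENNReal.ofReal T ^ ((3 : ℝ)/4) * I4 ^ ((1 : ℝ)/4) * E := by
          have h2 : (1 : ℝ≥0∞) ≤ 2 := one_le_two
          calc ENNReal.ofReal T ^ ((3 : ℝ)/4) * I4 ^ ((1 : ℝ)/4) * E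
              = 1 * (ENNReal.ofReal T ^ ((3 : ℝ)/4) * I4 ^ ((1 : ℝ)/4) * E) := (one_mul _).symm
            _ ≤ 2 * (ENNReal.ofReal T ^ ((3 : ℝ)/4) * I4 ^ ((1 : ℝ)/4) * E) :=
                mul_le_mul_left h2 _
            _ = 2 * ENNReal.ofReal T ^ ((3 : ℝ)/4) * I4 ^ ((1 : ℝ)/4) * E := by ring
end

section
/- Let a < b be real numbers, I = [a,b], and let y, z : I × ℝ → ℂ be measurable such that for almost every t ∈ I the functions y(t,·) and z(t,·) are differentiable on ℝ. Then ∫_I ‖z(t)·conj(y(t))‖_{W^{1,2}(ℝ)} dt ≤ (b−a)^{3/4} · ( 2 · (∫_I ‖z(t)‖_{W^{1,∞}(ℝ)}⁴ dt)^{1/4} · ess sup_{t∈I} ‖y(t)‖_{L²(ℝ)} + (∫_I ‖y(t)‖_{W^{1,∞}(ℝ)}⁴ dt)^{1/4} · ess sup_{t∈I} ‖z(t)‖_{L²(ℝ)} ), as an inequality of extended nonnegative reals. (Persistence-of-regularity estimate in d = 1: the H¹ norm of the product is controlled using only the L² norms of the factors in time-sup, which underlies Theorem 5.7/5.8 removing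 the extra noise assumption.) -/
open MeasureTheory Filter
open scoped ENNReal

namespace PersistAux


noncomputable def ratSup (g : ℝ → ℂ) : ℝ≥0∞ := ⨆ q : ℚ, (‖g (q : ℝ)‖₊ : ℝ≥0∞)

noncomputable def ratLip (g : ℝ → ℂ) : ℝ≥0∞ :=
  ⨆ p : ℚ, ⨆ q : ℚ, (‖g (p : ℝ) - g (q : ℝ)‖₊ : ℝ≥0∞) / (‖(p : ℝ) - (q : ℝ)‖₊ : ℝ≥0∞)

lemma rat_dense_closed {P : ℝ → Prop} (h : IsClosed {x | P x}) (hq : ∀ q : ℚ, P (q : ℝ)) :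
    ∀ x : ℝ, P x := by
  intro x
  have hsub : Set.range ((↑) : ℚ → ℝ) ⊆ {x | P x} := by
    rintro _ ⟨q, rfl⟩; exact hq q
  have hx : x ∈ closure (Set.range ((↑) : ℚ → ℝ)) := by
    rw [Rat.denseRange_cast.closure_eq]; trivial
  exact h.closure_subset (closure_mono hsub hx)

lemma le_ratSup {g : ℝ → ℂ} (hg : Continuous g) (x : ℝ) :
    (‖g x‖₊ : ℝ≥0∞) ≤ ratSup g := by
  refine rat_dense_closed (P := fun x => (‖g x‖₊ : ℝ≥0∞) ≤ ratSup g) ?_ ?_ x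
  · exact isClosed_le (ENNReal.continuous_coe.comp hg.nnnorm) continuous_const
  · exact fun q => le_iSup (fun q : ℚ => (‖g (q : ℝ)‖₊ : ℝ≥0∞)) q

lemma ratSup_le_essSup {g : ℝ → ℂ} (hg : Continuous g) :
    ratSup g ≤ eLpNormEssSup g (volume : Measure ℝ) := by
  refine iSup_le fun q => ?_
  by_contra hlt
  push_neg at hlt
  obtain ⟨c, hc1, hc2⟩ := exists_between hlt
  have hopen : IsOpen {x : ℝ | c < (‖g x‖₊ : ℝ≥0∞)} :=
    isOpen_lt continuous_const (ENNReal.continuous_coe.comp hg.nnnorm)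
  have hpos : 0 < volume {x : ℝ | c < (‖g x‖₊ : ℝ≥0∞)} :=
    hopen.measure_pos _ ⟨(q : ℝ), hc2⟩
  have hnull : volume {x : ℝ | c < (‖g x‖₊ : ℝ≥0∞)} = 0 := by
    have h := ae_le_eLpNormEssSup (f := g) (μ := (volume : Measure ℝ))
    rw [Filter.eventually_iff, mem_ae_iff] at h
    refine measure_mono_null ?_ h
    intro x hx
    simp only [Set.mem_compl_iff, Set.mem_setOf_eq, not_le]
    exact lt_of_le_of_lt hc1.le hx
  exact hpos.ne' hnull


lemma lipschitzWith_toNNReal {g : ℝ → ℂ} (hg : Continuous g) (hL : ratLip g ≠ ∞) :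
    LipschitzWith (ratLip g).toNNReal g := by
  set K := (ratLip g).toNNReal with hKdef
  have hK : ratLip g = (K : ℝ≥0∞) := (ENNReal.coe_toNNReal hL).symm
  have hrat : ∀ p q : ℚ, ‖g (p : ℝ) - g (q : ℝ)‖ ≤ (K : ℝ) * ‖(p : ℝ) - (q : ℝ)‖ := by
    intro p q
    rcases eq_or_ne (p : ℝ) (q : ℝ) with hpq | hpq
    · simp [hpq, mul_nonneg K.coe_nonneg (norm_nonneg _)]
    · have hd : (‖(p : ℝ) - (q : ℝ)‖₊ : ℝ≥0∞) ≠ 0 := by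
        simpa [sub_eq_zero] using hpq
      have h1 : (‖g (p : ℝ) - g (q : ℝ)‖₊ : ℝ≥0∞) / (‖(p : ℝ) - (q : ℝ)‖₊ : ℝ≥0∞) ≤ (K : ℝ≥0∞) := by
        rw [← hK]
        exact le_iSup₂ (f := fun (p q : ℚ) => (‖g (p : ℝ) - g (q : ℝ)‖₊ : ℝ≥0∞) / (‖(p : ℝ) - (q : ℝ)‖₊ : ℝ≥0∞)) p q
      have h2 : (‖g (p : ℝ) - g (q : ℝ)‖₊ : ℝ≥0∞) ≤ (K : ℝ≥0∞) * (‖(p : ℝ) - (q : ℝ)‖₊ : ℝ≥0∞) :=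
        (ENNReal.div_le_iff_le_mul (Or.inl hd) (Or.inl ENNReal.coe_ne_top)).mp h1
      have h3 : ‖g (p : ℝ) - g (q : ℝ)‖₊ ≤ K * ‖(p : ℝ) - (q : ℝ)‖₊ := by
        exact_mod_cast h2
      have h4 := NNReal.coe_le_coe.mpr h3
      rw [coe_nnnorm, NNReal.coe_mul, coe_nnnorm] at h4
      exact h4
  have hall : ∀ x y : ℝ, ‖g x - g y‖ ≤ (K : ℝ) * ‖x - y‖ := by
    have h1 : ∀ q : ℚ, ∀ x : ℝ, ‖g x - g (q : ℝ)‖ ≤ (K : ℝ) * ‖x - (q : ℝ)‖ := by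
      intro q
      refine rat_dense_closed ?_ (fun p => hrat p q)
      exact isClosed_le (by fun_prop) (by fun_prop)
    intro x
    refine rat_dense_closed ?_ (fun q => h1 q x)
    exact isClosed_le (by fun_prop) (by fun_prop)
  refine LipschitzWith.of_dist_le_mul fun x y => ?_
  simpa [dist_eq_norm] using hall x y

lemma nnnorm_fderiv_le_ratLip {g : ℝ → ℂ} (hg : Continuous g) (x : ℝ) :
    (‖fderiv ℝ g x‖₊ : ℝ≥0∞) ≤ ratLip g := by
  rcases eq_or_ne (ratLip g) ∞ with hL | hL
  · simp [hL]
  have hlip := lipschitzWith_toNNReal hg hL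
  have h := norm_fderiv_le_of_lipschitz ℝ hlip (x₀ := x)
  have h' : ‖fderiv ℝ g x‖₊ ≤ (ratLip g).toNNReal := by exact_mod_cast h
  calc (‖fderiv ℝ g x‖₊ : ℝ≥0∞) ≤ ((ratLip g).toNNReal : ℝ≥0∞) := by exact_mod_cast h'
    _ = ratLip g := ENNReal.coe_toNNReal hL


lemma ratLip_le_essSup_fderiv {g : ℝ → ℂ} (hg : Differentiable ℝ g) :
    ratLip g ≤ eLpNormEssSup (fderiv ℝ g) (volume : Measure ℝ) := by
  set C := eLpNormEssSup (fderiv ℝ g) (volume : Measure ℝ) with hCdef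
  rcases eq_or_ne C ∞ with hC | hC
  · rw [hC]; exact le_top
  set K := C.toNNReal with hKdef
  have hK : C = (K : ℝ≥0∞) := (ENNReal.coe_toNNReal hC).symm
  have hae : ∀ᵐ x : ℝ, ‖deriv g x‖ ≤ (K : ℝ) := by
    filter_upwards [ae_le_eLpNormEssSup (f := fderiv ℝ g) (μ := (volume : Measure ℝ))] with x hx
    rw [← hCdef, hK, enorm_eq_nnnorm, ENNReal.coe_le_coe] at hx
    have h1 : ‖deriv g x‖ ≤ ‖fderiv ℝ g x‖ := by
      rw [← fderiv_apply_one_eq_deriv]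
      calc ‖fderiv ℝ g x 1‖ ≤ ‖fderiv ℝ g x‖ * ‖(1 : ℝ)‖ := (fderiv ℝ g x).le_opNorm 1
        _ = ‖fderiv ℝ g x‖ := by simp
    exact le_trans h1 (by exact_mod_cast hx)
  have hmeas : AEStronglyMeasurable (deriv g) (volume : Measure ℝ) :=
    (measurable_deriv g).aestronglyMeasurable
  refine iSup_le fun p => iSup_le fun q => ?_
  rcases eq_or_ne (p : ℝ) (q : ℝ) with hpq | hpq
  · simp [hpq]
  have hint : IntervalIntegrable (deriv g) volume (q : ℝ) (p : ℝ) := by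
    rw [intervalIntegrable_iff]
    haveI : IsFiniteMeasure ((volume : Measure ℝ).restrict (Set.uIoc (q : ℝ) (p : ℝ))) := by
      constructor
      rw [Measure.restrict_apply_univ, Set.uIoc, Real.volume_Ioc]
      exact ENNReal.ofReal_lt_top
    exact Integrable.mono' (integrable_const (K : ℝ)) hmeas.restrict
      (ae_restrict_of_ae hae)
  have hftc : ∫ x in (q : ℝ)..(p : ℝ), deriv g x = g (p : ℝ) - g (q : ℝ) :=
    intervalIntegral.integral_eq_sub_of_hasDerivAt (fun x _ => (hg x).hasDerivAt) hint
  have hb : ‖g (p : ℝ) - g (q : ℝ)‖ ≤ (K : ℝ) * |(p : ℝ) - (q : ℝ)| := by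
    rw [← hftc]
    exact intervalIntegral.norm_integral_le_of_norm_le_const_ae (hae.mono fun x hx _ => hx)
  have hb' : ‖g (p : ℝ) - g (q : ℝ)‖₊ ≤ K * ‖(p : ℝ) - (q : ℝ)‖₊ := by
    rw [← NNReal.coe_le_coe, coe_nnnorm, NNReal.coe_mul, coe_nnnorm, Real.norm_eq_abs]
    exact hb
  have hd : (‖(p : ℝ) - (q : ℝ)‖₊ : ℝ≥0∞) ≠ 0 := by simpa [sub_eq_zero] using hpq
  rw [hK]
  rw [ENNReal.div_le_iff_le_mul (Or.inl hd) (Or.inl ENNReal.coe_ne_top)]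
  exact_mod_cast hb'


lemma eLpNormEssSup_le_ratSup {g : ℝ → ℂ} (hg : Continuous g) :
    eLpNormEssSup g (volume : Measure ℝ) ≤ ratSup g :=
  essSup_le_of_ae_le _ (Filter.Eventually.of_forall (le_ratSup hg))

lemma eLpNormEssSup_fderiv_le_ratLip {g : ℝ → ℂ} (hg : Continuous g) :
    eLpNormEssSup (fderiv ℝ g) (volume : Measure ℝ) ≤ ratLip g :=
  essSup_le_of_ae_le _ (Filter.Eventually.of_forall (nnnorm_fderiv_le_ratLip hg))

lemma ratLip_conj (f : ℝ → ℂ) :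
    ratLip (fun ξ => (starRingEnd ℂ) (f ξ)) = ratLip f := by
  unfold ratLip
  congr 1; funext p; congr 1; funext q
  rw [← map_sub]
  congr 2
  exact nnnorm_star _

lemma key {f g : ℝ → ℂ} (hfm : Measurable f) (hgm : Measurable g)
    (hf : Differentiable ℝ f) (hg : Differentiable ℝ g) :
    W1NormR 2 (fun ξ => g ξ * (starRingEnd ℂ) (f ξ))
      ≤ (ratSup g + ratLip g) * eLpNorm f 2 (volume : Measure ℝ)
        + ratLip f * eLpNorm g 2 (volume : Measure ℝ) := by
  set c : ℝ → ℂ := fun ξ => (starRingEnd ℂ) (f ξ) with hcdef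
  have hcd : Differentiable ℝ c := by
    exact hf.star
  have hcm : Measurable c := continuous_star.measurable.comp hfm
  have hc2 : eLpNorm c 2 (volume : Measure ℝ) = eLpNorm f 2 (volume : Measure ℝ) :=
    eLpNorm_congr_nnnorm_ae (Filter.Eventually.of_forall fun x => nnnorm_star (f x))
  -- L² part
  have h0 : eLpNorm (fun ξ => g ξ * c ξ) 2 (volume : Measure ℝ)
      ≤ ratSup g * eLpNorm f 2 (volume : Measure ℝ) := by
    have h := eLpNorm_smul_le_eLpNorm_top_mul_eLpNorm (μ := (volume : Measure ℝ)) 2 hcm.aestronglyMeasurable g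
    have heq : (g • c) = fun ξ => g ξ * c ξ := by
      funext ξ; simp [Pi.smul_apply', smul_eq_mul]
    rw [heq] at h
    calc eLpNorm (fun ξ => g ξ * c ξ) 2 (volume : Measure ℝ)
        ≤ eLpNorm g ⊤ (volume : Measure ℝ) * eLpNorm c 2 (volume : Measure ℝ) := h
      _ ≤ ratSup g * eLpNorm f 2 (volume : Measure ℝ) := by
          rw [hc2, eLpNorm_exponent_top]
          exact mul_le_mul_left (eLpNormEssSup_le_ratSup hg.continuous) _
  -- derivative part
  have hprod : fderiv ℝ (fun ξ => g ξ * c ξ)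
      = fun x => g x • fderiv ℝ c x + c x • fderiv ℝ g x :=
    funext fun x => fderiv_mul (hg x) (hcd x)
  have hG1m : AEStronglyMeasurable (fun x => g x • fderiv ℝ c x) (volume : Measure ℝ) :=
    hgm.aestronglyMeasurable.smul (measurable_fderiv ℝ c).aestronglyMeasurable
  have hG2m : AEStronglyMeasurable (fun x => c x • fderiv ℝ g x) (volume : Measure ℝ) :=
    hcm.aestronglyMeasurable.smul (measurable_fderiv ℝ g).aestronglyMeasurable
  have h1 : eLpNorm (fderiv ℝ (fun ξ => g ξ * c ξ)) 2 (volume : Measure ℝ)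
      ≤ eLpNorm (fun x => g x • fderiv ℝ c x) 2 (volume : Measure ℝ)
        + eLpNorm (fun x => c x • fderiv ℝ g x) 2 (volume : Measure ℝ) := by
    rw [hprod]
    have := eLpNorm_add_le hG1m hG2m (p := 2) (by norm_num)
    exact this
  have h2 : eLpNorm (fun x => g x • fderiv ℝ c x) 2 (volume : Measure ℝ)
      ≤ ratLip f * eLpNorm g 2 (volume : Measure ℝ) := by
    have h := eLpNorm_smul_le_eLpNorm_mul_eLpNorm_top (μ := (volume : Measure ℝ)) 2 (fderiv ℝ c) hgm.aestronglyMeasurable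
    have heq : (g • fderiv ℝ c) = fun x => g x • fderiv ℝ c x := rfl
    rw [heq] at h
    calc eLpNorm (fun x => g x • fderiv ℝ c x) 2 (volume : Measure ℝ)
        ≤ eLpNorm g 2 (volume : Measure ℝ) * eLpNorm (fderiv ℝ c) ⊤ (volume : Measure ℝ) := h
      _ ≤ eLpNorm g 2 (volume : Measure ℝ) * ratLip f := by
          rw [eLpNorm_exponent_top]
          refine mul_le_mul_right ?_ _
          rw [← ratLip_conj f]
          exact eLpNormEssSup_fderiv_le_ratLip hcd.continuous
      _ = ratLip f * eLpNorm g 2 (volume : Measure ℝ) := mul_comm _ _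
  have h3 : eLpNorm (fun x => c x • fderiv ℝ g x) 2 (volume : Measure ℝ)
      ≤ ratLip g * eLpNorm f 2 (volume : Measure ℝ) := by
    have h := eLpNorm_smul_le_eLpNorm_mul_eLpNorm_top (μ := (volume : Measure ℝ)) 2 (fderiv ℝ g) hcm.aestronglyMeasurable
    have heq : (c • fderiv ℝ g) = fun x => c x • fderiv ℝ g x := rfl
    rw [heq] at h
    calc eLpNorm (fun x => c x • fderiv ℝ g x) 2 (volume : Measure ℝ)
        ≤ eLpNorm c 2 (volume : Measure ℝ) * eLpNorm (fderiv ℝ g) ⊤ (volume : Measure ℝ) := h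
      _ ≤ eLpNorm f 2 (volume : Measure ℝ) * ratLip g := by
          rw [eLpNorm_exponent_top, hc2]
          exact mul_le_mul_right (eLpNormEssSup_fderiv_le_ratLip hg.continuous) _
      _ = ratLip g * eLpNorm f 2 (volume : Measure ℝ) := mul_comm _ _
  calc W1NormR 2 (fun ξ => g ξ * c ξ)
      = eLpNorm (fun ξ => g ξ * c ξ) 2 (volume : Measure ℝ)
        + eLpNorm (fderiv ℝ (fun ξ => g ξ * c ξ)) 2 (volume : Measure ℝ) := rfl
    _ ≤ ratSup g * eLpNorm f 2 (volume : Measure ℝ)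
        + (ratLip f * eLpNorm g 2 (volume : Measure ℝ)
          + ratLip g * eLpNorm f 2 (volume : Measure ℝ)) :=
        add_le_add h0 (h1.trans (add_le_add h2 h3))
    _ = (ratSup g + ratLip g) * eLpNorm f 2 (volume : Measure ℝ)
        + ratLip f * eLpNorm g 2 (volume : Measure ℝ) := by ring


lemma measurable_ratSup {z : ℝ → ℝ → ℂ} (hz : Measurable (Function.uncurry z)) :
    Measurable fun t => ratSup (z t) := by
  apply Measurable.iSup
  intro q
  exact ((hz.comp (measurable_id.prodMk measurable_const)).nnnorm).coe_nnreal_ennreal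

lemma measurable_ratLip {z : ℝ → ℝ → ℂ} (hz : Measurable (Function.uncurry z)) :
    Measurable fun t => ratLip (z t) := by
  apply Measurable.iSup; intro p
  apply Measurable.iSup; intro q
  have h1 : Measurable fun t => z t (p : ℝ) :=
    hz.comp (measurable_id.prodMk measurable_const)
  have h2 : Measurable fun t => z t (q : ℝ) :=
    hz.comp (measurable_id.prodMk measurable_const)
  exact (((h1.sub h2).nnnorm).coe_nnreal_ennreal).div measurable_const

end PersistAux

open PersistAux in
/-- Persistence-of-regularity estimate in `d = 1` on an interval `I = [a,b]`. -/
theorem persistence_estimate_d1 (a b : ℝ) (hab : a < b) (y z : ℝ → ℝ → ℂ)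
    (hy : Measurable (Function.uncurry y)) (hz : Measurable (Function.uncurry z))
    (hdiff : ∀ᵐ t ∂((volume : Measure ℝ).restrict (Set.Icc a b)),
      Differentiable ℝ (y t) ∧ Differentiable ℝ (z t)) :
    (∫⁻ t in Set.Icc a b, W1NormR 2 (fun ξ => z t ξ * (starRingEnd ℂ) (y t ξ)))
      ≤ ENNReal.ofReal (b - a) ^ ((3 : ℝ) / 4)
          * (2 * (∫⁻ t in Set.Icc a b, W1NormR ⊤ (z t) ^ ((4 : ℝ))) ^ ((1 : ℝ) / 4)
                * essSup (fun t => eLpNorm (y t) 2 (volume : Measure ℝ))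
                    ((volume : Measure ℝ).restrict (Set.Icc a b))
              + (∫⁻ t in Set.Icc a b, W1NormR ⊤ (y t) ^ ((4 : ℝ))) ^ ((1 : ℝ) / 4)
                * essSup (fun t => eLpNorm (z t) 2 (volume : Measure ℝ))
                    ((volume : Measure ℝ).restrict (Set.Icc a b))) := by
  set μI := (volume : Measure ℝ).restrict (Set.Icc a b) with hμI
  set Cy := essSup (fun t => eLpNorm (y t) 2 (volume : Measure ℝ)) μI with hCy
  set Cz := essSup (fun t => eLpNorm (z t) 2 (volume : Measure ℝ)) μI with hCz
  set Gz : ℝ → ℝ≥0∞ := fun t => ratSup (z t) + ratLip (z t) with hGz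
  set Gy : ℝ → ℝ≥0∞ := fun t => ratLip (y t) with hGy
  have hGzm : Measurable Gz := (measurable_ratSup hz).add (measurable_ratLip hz)
  have hGym : Measurable Gy := measurable_ratLip hy
  -- a.e. pointwise bound
  have hbound : ∀ᵐ t ∂μI,
      W1NormR 2 (fun ξ => z t ξ * (starRingEnd ℂ) (y t ξ)) ≤ Gz t * Cy + Gy t * Cz := by
    filter_upwards [hdiff,
      ae_le_essSup (μ := μI) (f := fun t => eLpNorm (y t) 2 (volume : Measure ℝ)),
      ae_le_essSup (μ := μI) (f := fun t => eLpNorm (z t) 2 (volume : Measure ℝ))]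
      with t ht hty htz
    calc W1NormR 2 (fun ξ => z t ξ * (starRingEnd ℂ) (y t ξ))
        ≤ (ratSup (z t) + ratLip (z t)) * eLpNorm (y t) 2 (volume : Measure ℝ)
          + ratLip (y t) * eLpNorm (z t) 2 (volume : Measure ℝ) :=
          key (hy.comp (measurable_prodMk_left)) (hz.comp (measurable_prodMk_left))
            ht.1 ht.2
      _ ≤ Gz t * Cy + Gy t * Cz :=
          add_le_add (mul_le_mul_right hty _) (mul_le_mul_right htz _)
  -- a.e. comparison with W1NormR ⊤
  have hGzW : ∀ᵐ t ∂μI, Gz t ≤ W1NormR ⊤ (z t) := by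
    filter_upwards [hdiff] with t ht
    have e1 : W1NormR ⊤ (z t) = eLpNormEssSup (z t) (volume : Measure ℝ)
        + eLpNormEssSup (fderiv ℝ (z t)) (volume : Measure ℝ) := by
      simp only [W1NormR, eLpNorm_exponent_top]
    rw [e1]
    exact add_le_add (ratSup_le_essSup ht.2.continuous) (ratLip_le_essSup_fderiv ht.2)
  have hGyW : ∀ᵐ t ∂μI, Gy t ≤ W1NormR ⊤ (y t) := by
    filter_upwards [hdiff] with t ht
    have e1 : W1NormR ⊤ (y t) = eLpNormEssSup (y t) (volume : Measure ℝ)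
        + eLpNormEssSup (fderiv ℝ (y t)) (volume : Measure ℝ) := by
      simp only [W1NormR, eLpNorm_exponent_top]
    rw [e1]
    exact le_add_of_nonneg_of_le zero_le (ratLip_le_essSup_fderiv ht.1)
  -- Hoelder in time
  have hhold : ∀ G : ℝ → ℝ≥0∞, Measurable G →
      ∫⁻ t, G t ∂μI ≤ (∫⁻ t, G t ^ (4 : ℝ) ∂μI) ^ ((1 : ℝ) / 4)
        * ENNReal.ofReal (b - a) ^ ((3 : ℝ) / 4) := by
    intro G hG
    have hpq : Real.HolderConjugate 4 (4 / 3) := ⟨by norm_num, by norm_num, by norm_num⟩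
    have h := ENNReal.lintegral_mul_le_Lp_mul_Lq μI hpq hG.aemeasurable
      (aemeasurable_const (b := (1 : ℝ≥0∞)))
    simp only [Pi.mul_apply, mul_one, ENNReal.one_rpow, lintegral_one] at h
    have hμuniv : μI Set.univ = ENNReal.ofReal (b - a) := by
      rw [hμI, Measure.restrict_apply_univ, Real.volume_Icc]
    rw [hμuniv] at h
    norm_num at h ⊢
    exact h
  set M := ENNReal.ofReal (b - a) ^ ((3 : ℝ) / 4) with hM
  set Az := (∫⁻ t, Gz t ^ (4 : ℝ) ∂μI) ^ ((1 : ℝ) / 4) with hAz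
  set Ay := (∫⁻ t, Gy t ^ (4 : ℝ) ∂μI) ^ ((1 : ℝ) / 4) with hAy
  set X := (∫⁻ t in Set.Icc a b, W1NormR ⊤ (z t) ^ (4 : ℝ)) ^ ((1 : ℝ) / 4) with hX
  set Y := (∫⁻ t in Set.Icc a b, W1NormR ⊤ (y t) ^ (4 : ℝ)) ^ ((1 : ℝ) / 4) with hY
  have hAX : Az ≤ X := by
    refine ENNReal.rpow_le_rpow ?_ (by norm_num)
    refine lintegral_mono_ae (hGzW.mono fun t h => ?_)
    exact ENNReal.rpow_le_rpow h (by norm_num)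
  have hAY : Ay ≤ Y := by
    refine ENNReal.rpow_le_rpow ?_ (by norm_num)
    refine lintegral_mono_ae (hGyW.mono fun t h => ?_)
    exact ENNReal.rpow_le_rpow h (by norm_num)
  have h2X : Az ≤ 2 * X := hAX.trans (le_mul_of_one_le_left' one_le_two)
  calc (∫⁻ t, W1NormR 2 (fun ξ => z t ξ * (starRingEnd ℂ) (y t ξ)) ∂μI)
      ≤ ∫⁻ t, (Gz t * Cy + Gy t * Cz) ∂μI := lintegral_mono_ae hbound
    _ = (∫⁻ t, Gz t ∂μI) * Cy + (∫⁻ t, Gy t ∂μI) * Cz := by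
        rw [lintegral_add_left (hGzm.mul_const _), lintegral_mul_const _ hGzm,
          lintegral_mul_const _ hGym]
    _ ≤ (Az * M) * Cy + (Ay * M) * Cz :=
        add_le_add (mul_le_mul_left (hhold Gz hGzm) _) (mul_le_mul_left (hhold Gy hGym) _)
    _ = M * (Az * Cy) + M * (Ay * Cz) := by ring
    _ ≤ M * (2 * X * Cy) + M * (Y * Cz) :=
        add_le_add (mul_le_mul_right (mul_le_mul_left h2X _) _)
          (mul_le_mul_right (mul_le_mul_left hAY _) _)
    _ = M * (2 * X * Cy + Y * Cz) := by ring
end
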